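/- Let h₊ > 0, U⁺ ∈ C²([0, h₊]; ℝ), and k ∈ ℝ. For c ∈ ℝ \ U⁺([0, h₊]), let y⁺(c, k, ·) be the unique solution on [0, h₊] of the Rayleigh equation −y'' + (k² + (U⁺)''/(U⁺ − c)) y = 0 with y(h₊) = 0, y'(h₊) = 1. Then y⁺(c, k, 0) ≠ 0, and the function c ↦ Y⁺(c, k) := (y⁺)'(c, k, 0)/y⁺(c, k, 0) is differentiable on the open set ℝ \ U⁺([0, h₊]) with ∂_c Y⁺(c, k) = − y⁺(c, k, 0)^{−2} ∫_{0}^{h₊} ( (U⁺)''(x) / (U⁺(x) − c)² ) y⁺(c, k, x)² dx. In particular, if (U⁺)'' > 0 on [0, h₊], then ∂_c Y⁺(c, k) < 0 for all such c. -/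

import Mathlib

open Set MeasureTheory intervalIntegral

open Function
open scoped ENNReal


lemma my_integral_pos {a b : ℝ} (hab : a < b) {f : ℝ → ℝ}
    (hf : ContinuousOn f (Icc a b)) (hnn : ∀ x ∈ Icc a b, 0 ≤ f x)
    {x₀ : ℝ} (hx₀ : x₀ ∈ Icc a b) (hpos : 0 < f x₀) :
    0 < ∫ x in a..b, f x := by
  have hfi : IntervalIntegrable f volume a b := by
    apply ContinuousOn.intervalIntegrable
    rwa [uIcc_of_le hab.le]
  rw [intervalIntegral.integral_pos_iff_support_of_nonneg_ae' ?nn hfi]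
  case nn =>
    filter_upwards [ae_restrict_mem measurableSet_uIoc] with x hx
    exact hnn x (by rw [uIoc_of_le hab.le] at hx; exact ⟨hx.1.le, hx.2⟩)
  refine ⟨hab, ?_⟩
  have hcw : ContinuousWithinAt f (Icc a b) x₀ := hf x₀ hx₀
  rw [Metric.continuousWithinAt_iff] at hcw
  obtain ⟨η, hη, hball⟩ := hcw (f x₀ / 2) (by linarith)
  set s := max a (x₀ - η) with hs
  set t := min b (x₀ + η) with ht
  have hst : s < t := by
    have h1 := hx₀.1; have h2 := hx₀.2
    apply max_lt <;> apply lt_min <;> linarith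
  have hsub : Ioo s t ⊆ support f ∩ Ioc a b := by
    intro x hx
    have hxa : a < x := lt_of_le_of_lt (le_max_left _ _) hx.1
    have hxb : x ≤ b := le_of_lt (lt_of_lt_of_le hx.2 (min_le_left _ _))
    have hxI : x ∈ Icc a b := ⟨hxa.le, hxb⟩
    have hdist : dist x x₀ < η := by
      rw [Real.dist_eq, abs_lt]
      constructor
      · have := lt_of_le_of_lt (le_max_right a (x₀ - η)) hx.1; linarith
      · have := lt_of_lt_of_le hx.2 (min_le_right b (x₀ + η)); linarith
    have := hball hxI hdist
    rw [Real.dist_eq, abs_lt] at this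
    have hfx : 0 < f x := by linarith
    exact ⟨ne_of_gt hfx, hxa, hxb⟩
  calc (0:ℝ≥0∞) < volume (Ioo s t) := by
        rw [Real.volume_Ioo]; exact ENNReal.ofReal_pos.mpr (by linarith)
    _ ≤ volume (support f ∩ Ioc a b) := measure_mono hsub


lemma my_y0_ne_zero (hp : ℝ) (hhp : 0 < hp) (Up Up' Up'' : ℝ → ℝ)
    (hUp : ∀ x ∈ Icc (0:ℝ) hp, HasDerivAt Up (Up' x) x)
    (hUp' : ∀ x ∈ Icc (0:ℝ) hp, HasDerivAt Up' (Up'' x) x)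
    (k c : ℝ) (hc : ∀ x ∈ Icc (0:ℝ) hp, Up x ≠ c)
    (y y' y'' : ℝ → ℝ)
    (hode : ∀ x ∈ Icc (0:ℝ) hp, HasDerivAt y (y' x) x ∧ HasDerivAt y' (y'' x) x ∧
        -y'' x + (k ^ 2 + Up'' x / (Up x - c)) * y x = 0)
    (hyhp : y hp = 0) (hy'hp : y' hp = 1) : y 0 ≠ 0 := by
  intro hy0
  have h0I : (0:ℝ) ∈ Icc (0:ℝ) hp := ⟨le_refl 0, hhp.le⟩
  have hhpI : hp ∈ Icc (0:ℝ) hp := ⟨hhp.le, le_refl hp⟩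
  have hu0 : ∀ x ∈ Icc (0:ℝ) hp, Up x - c ≠ 0 := fun x hx => sub_ne_zero.mpr (hc x hx)
  set N : ℝ → ℝ := fun x => y' x * (Up x - c) - Up' x * y x with hN
  set g : ℝ → ℝ := fun x => N x * y x / (Up x - c) with hg
  set g' : ℝ → ℝ := fun x => k ^ 2 * y x ^ 2 + (N x / (Up x - c)) ^ 2 with hg'
  -- derivative of g
  have hgd : ∀ x ∈ Icc (0:ℝ) hp, HasDerivAt g (g' x) x := by
    intro x hx
    obtain ⟨hy, hy', heq⟩ := hode x hx
    have hu : HasDerivAt (fun x => Up x - c) (Up' x) x := (hUp x hx).sub_const c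
    have hNd : HasDerivAt N (y'' x * (Up x - c) + y' x * Up' x -
        (Up'' x * y x + Up' x * y' x)) x := ((hy'.mul hu).sub ((hUp' x hx).mul hy))
    have hux := hu0 x hx
    have hy''eq : y'' x = (k ^ 2 + Up'' x / (Up x - c)) * y x := by linarith
    have hNd' : HasDerivAt N (k ^ 2 * (Up x - c) * y x) x := by
      convert hNd using 1
      rw [hy''eq]; field_simp; ring
    have := ((hNd'.mul hy).div hu hux)
    refine this.congr_deriv ?_
    rw [hg']
    simp only [hN, Pi.mul_apply]
    field_simp
    ring
  have hcy : ContinuousOn y (Icc (0:ℝ) hp) :=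
    fun x hx => ((hode x hx).1.continuousAt).continuousWithinAt
  have hcy' : ContinuousOn y' (Icc (0:ℝ) hp) :=
    fun x hx => ((hode x hx).2.1.continuousAt).continuousWithinAt
  have hcU : ContinuousOn Up (Icc (0:ℝ) hp) :=
    fun x hx => ((hUp x hx).continuousAt).continuousWithinAt
  have hcU' : ContinuousOn Up' (Icc (0:ℝ) hp) :=
    fun x hx => ((hUp' x hx).continuousAt).continuousWithinAt
  have hcN : ContinuousOn N (Icc (0:ℝ) hp) :=
    (hcy'.mul (hcU.sub continuousOn_const)).sub (hcU'.mul hcy)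
  have hcg' : ContinuousOn g' (Icc (0:ℝ) hp) := by
    apply ContinuousOn.add
    · exact (continuousOn_const.mul (hcy.pow 2))
    · exact ((hcN.div (hcU.sub continuousOn_const) hu0).pow 2)
  have hint : IntervalIntegrable g' volume 0 hp := by
    apply ContinuousOn.intervalIntegrable; rwa [uIcc_of_le hhp.le]
  have hftc : ∫ x in (0:ℝ)..hp, g' x = g hp - g 0 := by
    apply intervalIntegral.integral_eq_sub_of_hasDerivAt
    · intro x hx; exact hgd x (by rwa [uIcc_of_le hhp.le] at hx)
    · exact hint
  have hghp : g hp = 0 := by simp [hg, hyhp]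
  have hg0 : g 0 = 0 := by simp [hg, hy0]
  have hzero : ∫ x in (0:ℝ)..hp, g' x = 0 := by rw [hftc, hghp, hg0, sub_zero]
  have hnn : ∀ x ∈ Icc (0:ℝ) hp, 0 ≤ g' x := fun x hx => by positivity
  have hposhp : 0 < g' hp := by
    have hNhp : N hp = Up hp - c := by simp [hN, hyhp, hy'hp]
    have hE : g' hp = k ^ 2 * y hp ^ 2 + (N hp / (Up hp - c)) ^ 2 := rfl
    rw [hE, hNhp, div_self (hu0 hp hhpI), hyhp]
    norm_num
  have := my_integral_pos hhp hcg' hnn hhpI hposhp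
  rw [hzero] at this; exact lt_irrefl 0 this


lemma my_lipschitz (hp : ℝ) (hhp : 0 < hp) (Up Up'' : ℝ → ℝ) (k c c' d M B : ℝ)
    (hd : 0 < d)
    (hM : ∀ x ∈ Icc (0:ℝ) hp, |Up'' x| ≤ M)
    (hdc : ∀ x ∈ Icc (0:ℝ) hp, d ≤ |Up x - c|)
    (hdc' : ∀ x ∈ Icc (0:ℝ) hp, d ≤ |Up x - c'|)
    (y1 y1' y1'' y2 y2' y2'' : ℝ → ℝ)
    (hode1 : ∀ x ∈ Icc (0:ℝ) hp, HasDerivAt y1 (y1' x) x ∧ HasDerivAt y1' (y1'' x) x ∧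
        -y1'' x + (k ^ 2 + Up'' x / (Up x - c)) * y1 x = 0)
    (hode2 : ∀ x ∈ Icc (0:ℝ) hp, HasDerivAt y2 (y2' x) x ∧ HasDerivAt y2' (y2'' x) x ∧
        -y2'' x + (k ^ 2 + Up'' x / (Up x - c')) * y2 x = 0)
    (hB : ∀ x ∈ Icc (0:ℝ) hp, |y1 x| ≤ B)
    (h1 : y1 hp = 0) (h1' : y1' hp = 1) (h2 : y2 hp = 0) (h2' : y2' hp = 1) :
    ∀ x ∈ Icc (0:ℝ) hp,
      |y2 x - y1 x| ≤ M * B / (d * d) * Real.exp ((k ^ 2 + M / d + 1) * hp) * |c' - c| ∧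
      |y2' x - y1' x| ≤ M * B / (d * d) * Real.exp ((k ^ 2 + M / d + 1) * hp) * |c' - c| := by
  have h0I : (0:ℝ) ∈ Icc (0:ℝ) hp := ⟨le_refl 0, hhp.le⟩
  have hM0 : 0 ≤ M := le_trans (abs_nonneg _) (hM 0 h0I)
  have hB0 : 0 ≤ B := le_trans (abs_nonneg _) (hB 0 h0I)
  set L : ℝ := k ^ 2 + M / d + 1 with hLdef
  set ε : ℝ := M * B / (d * d) * |c' - c| with hεdef
  have hL1 : 1 ≤ L := by
    have h1 : 0 ≤ M / d := div_nonneg hM0 hd.le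
    have h2 : 0 ≤ k ^ 2 := sq_nonneg k
    rw [hLdef]; linarith
  have hL0 : 0 < L := lt_of_lt_of_le one_pos hL1
  have hε0 : 0 ≤ ε := by positivity
  set v : ℝ → ℝ × ℝ := fun x => (y2 x - y1 x, y2' x - y1' x) with hvdef
  set vd : ℝ → ℝ × ℝ := fun x => (y2' x - y1' x, y2'' x - y1'' x) with hvddef
  have hmaps : ∀ t ∈ Icc (0:ℝ) hp, hp - t ∈ Icc (0:ℝ) hp := by
    intro t ht; exact ⟨by linarith [ht.2], by linarith [ht.1]⟩
  -- continuity of v ∘ (hp - ·)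
  have hcv : ContinuousOn (fun t => v (hp - t)) (Icc (0:ℝ) hp) := by
    have hc1 : ContinuousOn y1 (Icc (0:ℝ) hp) :=
      fun x hx => ((hode1 x hx).1.continuousAt).continuousWithinAt
    have hc1' : ContinuousOn y1' (Icc (0:ℝ) hp) :=
      fun x hx => ((hode1 x hx).2.1.continuousAt).continuousWithinAt
    have hc2 : ContinuousOn y2 (Icc (0:ℝ) hp) :=
      fun x hx => ((hode2 x hx).1.continuousAt).continuousWithinAt
    have hc2' : ContinuousOn y2' (Icc (0:ℝ) hp) :=
      fun x hx => ((hode2 x hx).2.1.continuousAt).continuousWithinAt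
    have h1c : ContinuousOn v (Icc (0:ℝ) hp) :=
      ContinuousOn.prodMk (hc2.sub hc1) (hc2'.sub hc1')
    exact h1c.comp ((continuous_const.sub continuous_id).continuousOn) hmaps
  have hderiv : ∀ t ∈ Ico (0:ℝ) hp,
      HasDerivWithinAt (fun t => v (hp - t)) ((-1 : ℝ) • vd (hp - t)) (Ici t) t := by
    intro t ht
    have hxI : hp - t ∈ Icc (0:ℝ) hp := hmaps t ⟨ht.1, ht.2.le⟩
    have hv : HasDerivAt v (vd (hp - t)) (hp - t) :=
      HasDerivAt.prodMk (((hode2 _ hxI).1).sub ((hode1 _ hxI).1))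
        (((hode2 _ hxI).2.1).sub ((hode1 _ hxI).2.1))
    have hinner : HasDerivAt (fun s : ℝ => hp - s) (-1 : ℝ) t := by
      simpa using (hasDerivAt_id t).const_sub hp
    exact (hv.scomp t hinner).hasDerivWithinAt
  have hbound : ∀ t ∈ Ico (0:ℝ) hp,
      ‖(-1 : ℝ) • vd (hp - t)‖ ≤ L * ‖v (hp - t)‖ + ε := by
    intro t ht
    set x := hp - t with hx
    have hxI : x ∈ Icc (0:ℝ) hp := hmaps t ⟨ht.1, ht.2.le⟩
    obtain ⟨hy1d, hy1d', heq1⟩ := hode1 x hxI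
    obtain ⟨hy2d, hy2d', heq2⟩ := hode2 x hxI
    have huc : Up x - c ≠ 0 := by
      have := lt_of_lt_of_le hd (hdc x hxI); exact abs_pos.mp (lt_of_lt_of_le hd (hdc x hxI))
    have huc' : Up x - c' ≠ 0 := abs_pos.mp (lt_of_lt_of_le hd (hdc' x hxI))
    rw [norm_smul]
    simp only [norm_neg, norm_one, one_mul]
    rw [Prod.norm_def, Prod.norm_def]
    simp only [Real.norm_eq_abs]
    set a := |y2 x - y1 x| with ha
    set b := |y2' x - y1' x| with hb
    have hm0 : 0 ≤ max a b := le_trans (abs_nonneg _) (le_max_left a b)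
    have hcomp1 : b ≤ L * max a b + ε := by
      have : b ≤ max a b := le_max_right a b
      nlinarith
    have hcomp2 : |y2'' x - y1'' x| ≤ L * max a b + ε := by
      have hkey : y2'' x - y1'' x =
          (k ^ 2 + Up'' x / (Up x - c')) * (y2 x - y1 x) +
          (Up'' x * (c' - c) / ((Up x - c) * (Up x - c'))) * y1 x := by
        have e1 : y1'' x = (k ^ 2 + Up'' x / (Up x - c)) * y1 x := by linarith
        have e2 : y2'' x = (k ^ 2 + Up'' x / (Up x - c')) * y2 x := by linarith
        rw [e1, e2]; field_simp; ring
      have hq2 : |k ^ 2 + Up'' x / (Up x - c')| ≤ k ^ 2 + M / d := by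
        calc |k ^ 2 + Up'' x / (Up x - c')| ≤ |k ^ 2| + |Up'' x / (Up x - c')| := abs_add_le _ _
          _ = k ^ 2 + |Up'' x| / |Up x - c'| := by rw [abs_div, abs_of_nonneg (sq_nonneg k)]
          _ ≤ k ^ 2 + M / d := by
              have := div_le_div₀ hM0 (hM x hxI) hd (hdc' x hxI); linarith
      have ht2 : |Up'' x * (c' - c) / ((Up x - c) * (Up x - c')) * y1 x| ≤ ε := by
        rw [abs_mul, abs_div, abs_mul, abs_mul]
        have hnum : |Up'' x| * |c' - c| ≤ M * |c' - c| :=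
          mul_le_mul_of_nonneg_right (hM x hxI) (abs_nonneg _)
        have hden : d * d ≤ |Up x - c| * |Up x - c'| :=
          mul_le_mul (hdc x hxI) (hdc' x hxI) hd.le (le_trans hd.le (hdc x hxI))
        have h1 : |Up'' x| * |c' - c| / (|Up x - c| * |Up x - c'|) ≤ M * |c' - c| / (d * d) :=
          div_le_div₀ (by positivity) hnum (by positivity) hden
        calc |Up'' x| * |c' - c| / (|Up x - c| * |Up x - c'|) * |y1 x|
            ≤ M * |c' - c| / (d * d) * B := by
              apply mul_le_mul h1 (hB x hxI) (abs_nonneg _) (by positivity)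
          _ = ε := by rw [hεdef]; ring
      calc |y2'' x - y1'' x|
          ≤ |(k ^ 2 + Up'' x / (Up x - c')) * (y2 x - y1 x)| +
            |Up'' x * (c' - c) / ((Up x - c) * (Up x - c')) * y1 x| := by
            rw [hkey]; exact abs_add_le _ _
        _ ≤ (k ^ 2 + M / d) * a + ε := by
            rw [abs_mul]
            have := mul_le_mul_of_nonneg_right hq2 (abs_nonneg (y2 x - y1 x))
            exact add_le_add (le_trans this (le_refl _)) ht2
        _ ≤ L * max a b + ε := by
            have h1 : a ≤ max a b := le_max_left a b
            have h2 : 0 ≤ k ^ 2 + M / d := by positivity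
            nlinarith
    exact max_le hcomp1 hcomp2
  have hstart : ‖(fun t => v (hp - t)) 0‖ ≤ 0 := by
    show ‖v (hp - 0)‖ ≤ 0
    have hv0 : v (hp - 0) = 0 := by
      simp only [hvdef, sub_zero, h1, h2, h1', h2', sub_self]
      rfl
    rw [hv0]; simp
  have hgron := norm_le_gronwallBound_of_norm_deriv_right_le hcv hderiv hstart hbound
  -- turn gronwallBound into explicit bound
  have hgb : ∀ s ∈ Icc (0:ℝ) hp, gronwallBound 0 L ε (s - 0) ≤ ε * Real.exp (L * hp) := by
    intro s hs
    rw [gronwallBound_of_K_ne_0 (ne_of_gt hL0)]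
    simp only [zero_mul, zero_add, sub_zero]
    have hexp : Real.exp (L * s) ≤ Real.exp (L * hp) :=
      Real.exp_le_exp.mpr (mul_le_mul_of_nonneg_left hs.2 hL0.le)
    have hLs0 : (0:ℝ) ≤ L * s := mul_nonneg hL0.le hs.1
    have h1 : ε / L ≤ ε := div_le_self hε0 hL1
    have h2 : (0:ℝ) ≤ Real.exp (L * s) - 1 := by
      have := Real.one_le_exp hLs0; linarith
    calc ε / L * (Real.exp (L * s) - 1) ≤ ε * (Real.exp (L * s) - 1) :=
          mul_le_mul_of_nonneg_right h1 h2
      _ ≤ ε * Real.exp (L * hp) := by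
          apply mul_le_mul_of_nonneg_left _ hε0
          have := Real.exp_pos (L * s); linarith
  intro x hxI
  have htI : hp - x ∈ Icc (0:ℝ) hp := hmaps x hxI
  have := le_trans (hgron (hp - x) htI) (hgb (hp - x) htI)
  have hvx : v (hp - (hp - x)) = v x := by norm_num
  rw [hvx] at this
  have hfinal : ‖v x‖ ≤ M * B / (d * d) * Real.exp (L * hp) * |c' - c| := by
    calc ‖v x‖ ≤ ε * Real.exp (L * hp) := this
      _ = M * B / (d * d) * Real.exp (L * hp) * |c' - c| := by rw [hεdef]; ring
  constructor
  · calc |y2 x - y1 x| = ‖(v x).1‖ := by simp [hvdef, Real.norm_eq_abs]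
      _ ≤ ‖v x‖ := norm_fst_le _
      _ ≤ _ := hfinal
  · calc |y2' x - y1' x| = ‖(v x).2‖ := by simp [hvdef, Real.norm_eq_abs]
      _ ≤ ‖v x‖ := norm_snd_le _
      _ ≤ _ := hfinal


lemma my_wronskian (hp : ℝ) (hhp : 0 < hp) (Up Up'' : ℝ → ℝ)
    (hUcont : ContinuousOn Up (Icc (0:ℝ) hp))
    (hUpc : ContinuousOn Up'' (Icc (0:ℝ) hp))
    (k c c' : ℝ)
    (hc : ∀ x ∈ Icc (0:ℝ) hp, Up x - c ≠ 0) (hc' : ∀ x ∈ Icc (0:ℝ) hp, Up x - c' ≠ 0)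
    (y1 y1' y1'' y2 y2' y2'' : ℝ → ℝ)
    (hode1 : ∀ x ∈ Icc (0:ℝ) hp, HasDerivAt y1 (y1' x) x ∧ HasDerivAt y1' (y1'' x) x ∧
        -y1'' x + (k ^ 2 + Up'' x / (Up x - c)) * y1 x = 0)
    (hode2 : ∀ x ∈ Icc (0:ℝ) hp, HasDerivAt y2 (y2' x) x ∧ HasDerivAt y2' (y2'' x) x ∧
        -y2'' x + (k ^ 2 + Up'' x / (Up x - c')) * y2 x = 0)
    (h1 : y1 hp = 0) (h1' : y1' hp = 1) (h2 : y2 hp = 0) (h2' : y2' hp = 1) :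
    y1 0 * y2' 0 - y1' 0 * y2 0 =
      -∫ x in (0:ℝ)..hp,
        (c' - c) * (Up'' x / ((Up x - c) * (Up x - c')) * (y1 x * y2 x)) := by
  set W : ℝ → ℝ := fun x => y1 x * y2' x - y1' x * y2 x with hW
  set W' : ℝ → ℝ := fun x =>
    (c' - c) * (Up'' x / ((Up x - c) * (Up x - c')) * (y1 x * y2 x)) with hW'
  have hc1 : ContinuousOn y1 (Icc (0:ℝ) hp) :=
    fun x hx => ((hode1 x hx).1.continuousAt).continuousWithinAt
  have hc2 : ContinuousOn y2 (Icc (0:ℝ) hp) :=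
    fun x hx => ((hode2 x hx).1.continuousAt).continuousWithinAt
  have hWd : ∀ x ∈ Icc (0:ℝ) hp, HasDerivAt W (W' x) x := by
    intro x hx
    obtain ⟨hy1, hy1', heq1⟩ := hode1 x hx
    obtain ⟨hy2, hy2', heq2⟩ := hode2 x hx
    have hd : HasDerivAt W (y1' x * y2' x + y1 x * y2'' x - (y1'' x * y2 x + y1' x * y2' x)) x :=
      (hy1.mul hy2').sub (hy1'.mul hy2)
    convert hd using 1
    have e1 : y1'' x = (k ^ 2 + Up'' x / (Up x - c)) * y1 x := by linarith
    have e2 : y2'' x = (k ^ 2 + Up'' x / (Up x - c')) * y2 x := by linarith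
    rw [hW', e1, e2]
    field_simp [hc x hx, hc' x hx]
    ring
  have hcW' : ContinuousOn W' (Icc (0:ℝ) hp) := by
    apply ContinuousOn.mul continuousOn_const
    exact (hUpc.div ((hUcont.sub continuousOn_const).mul (hUcont.sub continuousOn_const))
      (fun x hx => mul_ne_zero (hc x hx) (hc' x hx))).mul (hc1.mul hc2)
  have hint : IntervalIntegrable W' volume 0 hp := by
    apply ContinuousOn.intervalIntegrable; rwa [uIcc_of_le hhp.le]
  have hftc : ∫ x in (0:ℝ)..hp, W' x = W hp - W 0 := by
    apply intervalIntegral.integral_eq_sub_of_hasDerivAt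
    · intro x hx; exact hWd x (by rwa [uIcc_of_le hhp.le] at hx)
    · exact hint
  have hWhp : W hp = 0 := by simp [hW, h1, h2, h1', h2']
  have : ∫ x in (0:ℝ)..hp, W' x = -W 0 := by rw [hftc, hWhp, zero_sub]
  have hW0 : W 0 = y1 0 * y2' 0 - y1' 0 * y2 0 := rfl
  rw [← hW0, this, neg_neg]

set_option maxHeartbeats 2000000 in
/-- Derivative in `c` of `Y⁺(c, k) = (y⁺)'(c,k,0)/y⁺(c,k,0)` for the upper fundamental
solution of the Rayleigh equation, for real `c` off the range of `U⁺`. -/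
theorem deriv_c_Y_plus
    (hp : ℝ) (hhp : 0 < hp)
    (Up Up' Up'' : ℝ → ℝ)
    (hUp : ∀ x ∈ Icc (0:ℝ) hp, HasDerivAt Up (Up' x) x)
    (hUp' : ∀ x ∈ Icc (0:ℝ) hp, HasDerivAt Up' (Up'' x) x)
    (hUpc : ContinuousOn Up'' (Icc (0:ℝ) hp))
    (k : ℝ)
    (y y' y'' : ℝ → ℝ → ℝ)
    (hsol : ∀ c : ℝ, (∀ x ∈ Icc (0:ℝ) hp, Up x ≠ c) →
      (∀ x ∈ Icc (0:ℝ) hp,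
        HasDerivAt (y c) (y' c x) x ∧ HasDerivAt (y' c) (y'' c x) x ∧
        -y'' c x + (k ^ 2 + Up'' x / (Up x - c)) * y c x = 0) ∧
      y c hp = 0 ∧ y' c hp = 1) :
    ∀ c : ℝ, (∀ x ∈ Icc (0:ℝ) hp, Up x ≠ c) →
      y c 0 ≠ 0 ∧
      HasDerivAt (fun c' => y' c' 0 / y c' 0)
        (-((∫ x in (0:ℝ)..hp, Up'' x / (Up x - c) ^ 2 * y c x ^ 2) / y c 0 ^ 2)) c ∧
      ((∀ x ∈ Icc (0:ℝ) hp, 0 < Up'' x) →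
        -((∫ x in (0:ℝ)..hp, Up'' x / (Up x - c) ^ 2 * y c x ^ 2) / y c 0 ^ 2) < 0) := by
  
  intro c hc
  have h0I : (0:ℝ) ∈ Icc (0:ℝ) hp := ⟨le_refl 0, hhp.le⟩
  obtain ⟨hode, hyhp, hy'hp⟩ := hsol c hc
  have hcy : ContinuousOn (y c) (Icc (0:ℝ) hp) :=
    fun x hx => ((hode x hx).1.continuousAt).continuousWithinAt
  have hcU : ContinuousOn Up (Icc (0:ℝ) hp) :=
    fun x hx => ((hUp x hx).continuousAt).continuousWithinAt
  have hcsub : ∀ x ∈ Icc (0:ℝ) hp, Up x - c ≠ 0 := fun x hx => sub_ne_zero.mpr (hc x hx)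
  -- minimum distance to range
  obtain ⟨x₀, hx₀I, hx₀min⟩ := isCompact_Icc.exists_isMinOn (nonempty_Icc.mpr hhp.le)
    ((hcU.sub continuousOn_const).abs)
  set d := |Up x₀ - c| with hddef
  have hd : 0 < d := abs_pos.mpr (hcsub x₀ hx₀I)
  have hdc : ∀ x ∈ Icc (0:ℝ) hp, d ≤ |Up x - c| := fun x hx => (isMinOn_iff.mp hx₀min) x hx
  -- bounds
  obtain ⟨M, hM'⟩ := isCompact_Icc.exists_bound_of_continuousOn hUpc
  have hM : ∀ x ∈ Icc (0:ℝ) hp, |Up'' x| ≤ M := by simpa [Real.norm_eq_abs] using hM'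
  have hM0 : 0 ≤ M := le_trans (abs_nonneg _) (hM 0 h0I)
  obtain ⟨B, hB'⟩ := isCompact_Icc.exists_bound_of_continuousOn hcy
  have hB : ∀ x ∈ Icc (0:ℝ) hp, |y c x| ≤ B := by simpa [Real.norm_eq_abs] using hB'
  have hB0 : 0 ≤ B := le_trans (abs_nonneg _) (hB 0 h0I)
  obtain ⟨Bu, hBu'⟩ := isCompact_Icc.exists_bound_of_continuousOn (hcU.sub continuousOn_const)
  have hBu : ∀ x ∈ Icc (0:ℝ) hp, |Up x - c| ≤ Bu := by simpa [Real.norm_eq_abs] using hBu'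
  have hBu0 : 0 ≤ Bu := le_trans (abs_nonneg _) (hBu 0 h0I)
  -- nonvanishing
  have hb : y c 0 ≠ 0 :=
    my_y0_ne_zero hp hhp Up Up' Up'' hUp hUp' k c hc (y c) (y' c) (y'' c) hode hyhp hy'hp
  set b := y c 0 with hbdef
  have habs : 0 < |b| := abs_pos.mpr hb
  set I := ∫ x in (0:ℝ)..hp, Up'' x / (Up x - c) ^ 2 * y c x ^ 2 with hIdef
  set T := -(I / b ^ 2) with hTdef
  set d2 := d / 2 with hd2def
  have hd20 : 0 < d2 := half_pos hd
  set K₀ := M * B / (d2 * d2) * Real.exp ((k ^ 2 + M / d2 + 1) * hp) with hK₀def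
  have hK₀0 : 0 ≤ K₀ :=
    mul_nonneg (div_nonneg (mul_nonneg hM0 hB0) (mul_nonneg hd20.le hd20.le)) (Real.exp_pos _).le
  set C₁ := M * B * (K₀ * Bu + B) / (d2 * d2 * d2) with hC₁def
  have hC₁0 : 0 ≤ C₁ := div_nonneg
    (mul_nonneg (mul_nonneg hM0 hB0) (add_nonneg (mul_nonneg hK₀0 hBu0) hB0))
    (by positivity)
  set C := (hp * C₁ * |b| + |I| * K₀) * 2 / |b| ^ 3 with hCdef
  have hC0 : 0 ≤ C := div_nonneg
    (mul_nonneg (add_nonneg (mul_nonneg (mul_nonneg hhp.le hC₁0) (abs_nonneg b))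
      (mul_nonneg (abs_nonneg I) hK₀0)) (by norm_num)) (by positivity)
  set r := min d2 (|b| / (2 * (K₀ + 1))) with hrdef
  have hr0 : 0 < r := lt_min hd20 (by positivity)
  -- key estimate
  have key : ∀ c' : ℝ, c' ≠ c → |c' - c| ≤ r →
      |slope (fun c'' => y' c'' 0 / y c'' 0) c c' - T| ≤ C * |c' - c| := by
    intro c' hne hle
    have hΔ0 : c' - c ≠ 0 := sub_ne_zero.mpr hne
    have hΔd2 : |c' - c| ≤ d2 := le_trans hle (min_le_left _ _)
    have hΔb : |c' - c| ≤ |b| / (2 * (K₀ + 1)) := le_trans hle (min_le_right _ _)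
    have hdc2 : ∀ x ∈ Icc (0:ℝ) hp, d2 ≤ |Up x - c| := by
      intro x hx; have := hdc x hx; rw [hd2def]; linarith
    have hdc' : ∀ x ∈ Icc (0:ℝ) hp, d2 ≤ |Up x - c'| := by
      intro x hx
      have h1 : |Up x - c| - |c' - c| ≤ |Up x - c'| := by
        have h2 := abs_sub_abs_le_abs_sub (Up x - c) (c' - c)
        have heq : (Up x - c) - (c' - c) = Up x - c' := by ring
        rw [heq] at h2; linarith
      have h3 := hdc x hx
      have h4 : d = d2 + d2 := by rw [hd2def]; ring
      linarith
    have hcsub' : ∀ x ∈ Icc (0:ℝ) hp, Up x - c' ≠ 0 := by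
      intro x hx h
      have := hdc' x hx; rw [h, abs_zero] at this; linarith
    have hc'ne : ∀ x ∈ Icc (0:ℝ) hp, Up x ≠ c' := fun x hx => sub_ne_zero.mp (hcsub' x hx)
    obtain ⟨hode', hyhp', hy'hp'⟩ := hsol c' hc'ne
    have hcy' : ContinuousOn (y c') (Icc (0:ℝ) hp) :=
      fun x hx => ((hode' x hx).1.continuousAt).continuousWithinAt
    have hlip := my_lipschitz hp hhp Up Up'' k c c' d2 M B hd20 hM hdc2 hdc'
      (y c) (y' c) (y'' c) (y c') (y' c') (y'' c') hode hode' hB hyhp hy'hp hyhp' hy'hp'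
    rw [← hK₀def] at hlip
    have hwr := my_wronskian hp hhp Up Up'' hcU hUpc k c c' hcsub hcsub'
      (y c) (y' c) (y'' c) (y c') (y' c') (y'' c') hode hode' hyhp hy'hp hyhp' hy'hp'
    rw [intervalIntegral.integral_const_mul] at hwr
    set J := ∫ x in (0:ℝ)..hp, Up'' x / ((Up x - c) * (Up x - c')) * (y c x * y c' x) with hJdef
    set b' := y c' 0 with hb'def
    have hb'cl : |b' - b| ≤ K₀ * |c' - c| := (hlip 0 h0I).1
    have hb'lb : |b| / 2 ≤ |b'| := by
      have h1 : |b| - |b'| ≤ |b - b'| := abs_sub_abs_le_abs_sub b b'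
      rw [abs_sub_comm] at h1
      have h2 : K₀ * |c' - c| ≤ |b| / 2 := by
        have h3 : K₀ * |c' - c| ≤ K₀ * (|b| / (2 * (K₀ + 1))) :=
          mul_le_mul_of_nonneg_left hΔb hK₀0
        have h4 : K₀ * (|b| / (2 * (K₀ + 1))) ≤ |b| / 2 := by
          rw [← mul_div_assoc, div_le_div_iff₀ (by positivity) (by norm_num)]
          nlinarith [abs_nonneg b]
        linarith
      linarith
    have hb'0 : b' ≠ 0 := by
      intro h; rw [h, abs_zero] at hb'lb; linarith
    -- integrability
    have hintG' : IntervalIntegrable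
        (fun x => Up'' x / ((Up x - c) * (Up x - c')) * (y c x * y c' x)) volume 0 hp := by
      apply ContinuousOn.intervalIntegrable
      rw [uIcc_of_le hhp.le]
      exact (hUpc.div ((hcU.sub continuousOn_const).mul (hcU.sub continuousOn_const))
        (fun x hx => mul_ne_zero (hcsub x hx) (hcsub' x hx))).mul (hcy.mul hcy')
    have hintG : IntervalIntegrable
        (fun x => Up'' x / (Up x - c) ^ 2 * y c x ^ 2) volume 0 hp := by
      apply ContinuousOn.intervalIntegrable
      rw [uIcc_of_le hhp.le]
      exact (hUpc.div ((hcU.sub continuousOn_const).pow 2)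
        (fun x hx => pow_ne_zero 2 (hcsub x hx))).mul (hcy.pow 2)
    -- difference of integrals
    have hJI : |J - I| ≤ C₁ * |c' - c| * hp := by
      have hsub : J - I = ∫ x in (0:ℝ)..hp,
          (Up'' x / ((Up x - c) * (Up x - c')) * (y c x * y c' x)
            - Up'' x / (Up x - c) ^ 2 * y c x ^ 2) := by
        rw [hJdef, hIdef]
        exact (intervalIntegral.integral_sub hintG' hintG).symm
      have hbd : ∀ x ∈ Icc (0:ℝ) hp,
          |Up'' x / ((Up x - c) * (Up x - c')) * (y c x * y c' x)
            - Up'' x / (Up x - c) ^ 2 * y c x ^ 2| ≤ C₁ * |c' - c| := by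
        intro x hx
        have hu := hcsub x hx
        have hu' := hcsub' x hx
        have hid : Up'' x / ((Up x - c) * (Up x - c')) * (y c x * y c' x)
            - Up'' x / (Up x - c) ^ 2 * y c x ^ 2
            = Up'' x * y c x * ((y c' x - y c x) * (Up x - c) + y c x * (c' - c))
              / ((Up x - c) ^ 2 * (Up x - c')) := by
          field_simp
          ring
        rw [hid, abs_div]
        have hi : |(y c' x - y c x) * (Up x - c) + y c x * (c' - c)|
            ≤ K₀ * |c' - c| * Bu + B * |c' - c| := by
          calc |(y c' x - y c x) * (Up x - c) + y c x * (c' - c)|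
              ≤ |(y c' x - y c x) * (Up x - c)| + |y c x * (c' - c)| := abs_add_le _ _
            _ = |y c' x - y c x| * |Up x - c| + |y c x| * |c' - c| := by
                rw [abs_mul, abs_mul]
            _ ≤ K₀ * |c' - c| * Bu + B * |c' - c| := add_le_add
                (mul_le_mul (hlip x hx).1 (hBu x hx) (abs_nonneg _)
                  (mul_nonneg hK₀0 (abs_nonneg _)))
                (mul_le_mul_of_nonneg_right (hB x hx) (abs_nonneg _))
        have hnum : |Up'' x * y c x * ((y c' x - y c x) * (Up x - c) + y c x * (c' - c))|
            ≤ M * B * (K₀ * Bu + B) * |c' - c| := by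
          rw [abs_mul, abs_mul]
          calc |Up'' x| * |y c x| * |(y c' x - y c x) * (Up x - c) + y c x * (c' - c)|
              ≤ M * B * (K₀ * |c' - c| * Bu + B * |c' - c|) :=
                mul_le_mul (mul_le_mul (hM x hx) (hB x hx) (abs_nonneg _) hM0) hi
                  (abs_nonneg _) (mul_nonneg hM0 hB0)
            _ = M * B * (K₀ * Bu + B) * |c' - c| := by ring
        have hden : d2 * d2 * d2 ≤ |(Up x - c) ^ 2 * (Up x - c')| := by
          rw [abs_mul, abs_pow]
          have h1 := hdc2 x hx
          have h2 := hdc' x hx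
          have h3 := abs_nonneg (Up x - c)
          have h4 : d2 * d2 ≤ |Up x - c| ^ 2 := by
            rw [pow_two]; exact mul_le_mul h1 h1 hd20.le h3
          exact mul_le_mul h4 h2 hd20.le (sq_nonneg _)
        calc |Up'' x * y c x * ((y c' x - y c x) * (Up x - c) + y c x * (c' - c))|
              / |(Up x - c) ^ 2 * (Up x - c')|
            ≤ M * B * (K₀ * Bu + B) * |c' - c| / (d2 * d2 * d2) :=
              div_le_div₀
                (mul_nonneg (mul_nonneg (mul_nonneg hM0 hB0)
                  (add_nonneg (mul_nonneg hK₀0 hBu0) hB0)) (abs_nonneg _))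
                hnum (by positivity) hden
          _ = C₁ * |c' - c| := by rw [hC₁def]; ring
      rw [hsub]
      have hle2 := intervalIntegral.norm_integral_le_of_norm_le_const
        (C := C₁ * |c' - c|)
        (f := fun x => Up'' x / ((Up x - c) * (Up x - c')) * (y c x * y c' x)
            - Up'' x / (Up x - c) ^ 2 * y c x ^ 2)
        (a := 0) (b := hp) ?_
      · rw [Real.norm_eq_abs] at hle2
        rw [sub_zero, abs_of_pos hhp] at hle2
        exact hle2
      · intro x hx
        rw [uIoc_of_le hhp.le] at hx
        rw [Real.norm_eq_abs]
        exact hbd x ⟨hx.1.le, hx.2⟩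
    -- wronskian algebra
    have hwr' : b * y' c' 0 - y' c 0 * b' = -((c' - c) * J) := by
      rw [hbdef, hb'def, hJdef]; linarith [hwr]
    have hslope : slope (fun c'' => y' c'' 0 / y c'' 0) c c' = -(J / (b' * b)) := by
      have e1 : y' c' 0 / b' - y' c 0 / b = (b * y' c' 0 - y' c 0 * b') / (b' * b) := by
        field_simp
      calc slope (fun c'' => y' c'' 0 / y c'' 0) c c'
          = (y' c' 0 / b' - y' c 0 / b) / (c' - c) := by
            simp only [slope_def_field]; rfl
        _ = ((b * y' c' 0 - y' c 0 * b') / (b' * b)) / (c' - c) := by rw [e1]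
        _ = (-((c' - c) * J) / (b' * b)) / (c' - c) := by rw [hwr']
        _ = -(J / (b' * b)) := by field_simp
    rw [hslope]
    have hid2 : -(J / (b' * b)) - T = (I * (b' - b) - (J - I) * b) / (b' * b ^ 2) := by
      rw [hTdef]; field_simp; ring
    rw [hid2, abs_div]
    have hnum2 : |I * (b' - b) - (J - I) * b|
        ≤ |I| * (K₀ * |c' - c|) + (C₁ * |c' - c| * hp) * |b| := by
      calc |I * (b' - b) - (J - I) * b|
          ≤ |I * (b' - b)| + |(J - I) * b| := abs_sub _ _
        _ = |I| * |b' - b| + |J - I| * |b| := by rw [abs_mul, abs_mul]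
        _ ≤ |I| * (K₀ * |c' - c|) + (C₁ * |c' - c| * hp) * |b| := add_le_add
            (mul_le_mul_of_nonneg_left hb'cl (abs_nonneg I))
            (mul_le_mul_of_nonneg_right hJI (abs_nonneg b))
    have hden2 : |b| / 2 * b ^ 2 ≤ |b' * b ^ 2| := by
      rw [abs_mul]
      have h5 : |b ^ 2| = b ^ 2 := abs_of_nonneg (sq_nonneg b)
      rw [h5]
      exact mul_le_mul_of_nonneg_right hb'lb (sq_nonneg b)
    calc |I * (b' - b) - (J - I) * b| / |b' * b ^ 2|
        ≤ (|I| * (K₀ * |c' - c|) + (C₁ * |c' - c| * hp) * |b|) / (|b| / 2 * b ^ 2) :=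
          div_le_div₀
            (add_nonneg (mul_nonneg (abs_nonneg I) (mul_nonneg hK₀0 (abs_nonneg _)))
              (mul_nonneg (mul_nonneg (mul_nonneg hC₁0 (abs_nonneg _)) hhp.le) (abs_nonneg b)))
            hnum2 (mul_pos (half_pos habs) (pow_two_pos_of_ne_zero hb)) hden2
      _ = C * |c' - c| := by
          rw [hCdef, ← sq_abs b]
          have hbne : |b| ≠ 0 := ne_of_gt habs
          field_simp
          ring
  refine ⟨hb, ?_, ?_⟩
  · rw [hasDerivAt_iff_tendsto_slope]
    rw [Metric.tendsto_nhdsWithin_nhds]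
    intro ε hε
    refine ⟨min r (ε / (C + 1)), lt_min hr0 (by positivity), ?_⟩
    intro c' hc'mem hdist
    rw [Real.dist_eq] at hdist ⊢
    have hne : c' ≠ c := hc'mem
    have h1 : |c' - c| ≤ r := le_of_lt (lt_of_lt_of_le hdist (min_le_left _ _))
    have h2 : |c' - c| < ε / (C + 1) := lt_of_lt_of_le hdist (min_le_right _ _)
    have h3 := key c' hne h1
    calc |slope (fun c'' => y' c'' 0 / y c'' 0) c c' - T| ≤ C * |c' - c| := h3
      _ ≤ (C + 1) * |c' - c| := by nlinarith [abs_nonneg (c' - c)]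
      _ < (C + 1) * (ε / (C + 1)) := by
          exact mul_lt_mul_of_pos_left h2 (by positivity)
      _ = ε := by field_simp
  · intro hpos
    have hcG : ContinuousOn (fun x => Up'' x / (Up x - c) ^ 2 * y c x ^ 2) (Icc (0:ℝ) hp) :=
      (hUpc.div ((hcU.sub continuousOn_const).pow 2)
        (fun x hx => pow_ne_zero 2 (hcsub x hx))).mul (hcy.pow 2)
    have hI : 0 < I := by
      rw [hIdef]
      apply my_integral_pos hhp hcG
        (fun x hx => mul_nonneg (div_nonneg (hpos x hx).le (sq_nonneg _)) (sq_nonneg _)) h0I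
      exact mul_pos (div_pos (hpos 0 h0I) (pow_two_pos_of_ne_zero (hcsub 0 h0I)))
        (pow_two_pos_of_ne_zero hb)
    have hb2 : 0 < b ^ 2 := pow_two_pos_of_ne_zero hb
    have h6 : 0 < I / b ^ 2 := div_pos hI hb2
    have h7 : T = -(I / b ^ 2) := hTdef
    rw [h7]
    linarith
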